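/- Given ε ∈ (0,1), δ ∈ (0,1), and an integer r ≥ 1, if the integer N ≥ r satisfies ε·N ≥ (r−1) + ln(1/δ) + √(2(r−1)·ln(1/δ)), then B(r−1; N, ε) ≤ δ. -/

import Mathlib

/-- Binomial cumulative distribution function `B(k; N, ε)`,
with the convention that it is `0` for `k < 0`. -/
noncomputable def binomCdf (k : ℤ) (N : ℕ) (ε : ℝ) : ℝ :=
  ∑ i ∈ Finset.range (N + 1),
    if (i : ℤ) ≤ k then (N.choose i : ℝ) * ε ^ i * (1 - ε) ^ (N - i) else 0

/-- Chernoff-style bound on the partial binomial sum. -/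
lemma chernoff_sum (ε y : ℝ) (hε0 : 0 < ε) (hε1 : ε < 1) (hy0 : 0 < y) (hy1 : y ≤ 1)
    (N k : ℕ) :
    (∑ i ∈ Finset.range (N + 1),
      if (i : ℤ) ≤ (k : ℤ) then (N.choose i : ℝ) * ε ^ i * (1 - ε) ^ (N - i) else 0)
      ≤ y⁻¹ ^ k * (ε * y + (1 - ε)) ^ N := by
  have h1ε : (0:ℝ) ≤ 1 - ε := by linarith
  rw [add_pow, Finset.mul_sum]
  refine Finset.sum_le_sum fun i hi => ?_
  by_cases hik : (i : ℤ) ≤ (k : ℤ)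
  · have hik' : i ≤ k := by exact_mod_cast hik
    rw [if_pos hik]
    have hterm : (0:ℝ) ≤ (N.choose i : ℝ) * ε ^ i * (1 - ε) ^ (N - i) := by positivity
    have hyk : y ^ k ≤ y ^ i := pow_le_pow_of_le_one hy0.le hy1 hik'
    have h1 : (1:ℝ) ≤ y⁻¹ ^ k * y ^ i := by
      rw [inv_pow, ← div_eq_inv_mul, le_div_iff₀ (by positivity), one_mul]
      exact hyk
    calc (N.choose i : ℝ) * ε ^ i * (1 - ε) ^ (N - i)
        ≤ (y⁻¹ ^ k * y ^ i) * ((N.choose i : ℝ) * ε ^ i * (1 - ε) ^ (N - i)) :=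
          le_mul_of_one_le_left hterm h1
      _ = y⁻¹ ^ k * ((ε * y) ^ i * (1 - ε) ^ (N - i) * (N.choose i : ℝ)) := by ring
  · rw [if_neg hik]
    positivity

/-- Key analytic inequality. -/
lemma key_ineq (k L m : ℝ) (hk : 0 < k) (hL : 0 < L)
    (hm : k + L + Real.sqrt (2 * k * L) ≤ m) :
    k * Real.log (m / k) + k - m ≤ -L := by
  set s : ℝ := Real.sqrt (2 * k * L) with hs
  have hs0 : 0 ≤ s := Real.sqrt_nonneg _
  have hs2 : s ^ 2 = 2 * k * L := Real.sq_sqrt (by positivity)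
  set m₀ : ℝ := k + L + s with hm₀def
  have hm₀ : 0 < m₀ := by positivity
  have hmpos : 0 < m := lt_of_lt_of_le (by positivity) hm
  -- Step (a): k * log (m₀ / k) ≤ s
  have ha : k * Real.log (m₀ / k) ≤ s := by
    have hx : (0:ℝ) ≤ s / k := by positivity
    have hquad := Real.quadratic_le_exp_of_nonneg hx
    have hLk : L / k = (s / k) ^ 2 / 2 := by
      field_simp
      nlinarith [hs2]
    have hm₀k : m₀ / k = 1 + s / k + (s / k) ^ 2 / 2 := by
      rw [← hLk]; field_simp; ring
    have hlog : Real.log (m₀ / k) ≤ s / k := by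
      rw [← Real.log_exp (s / k)]
      apply Real.log_le_log (by positivity)
      rw [hm₀k]; exact hquad
    calc k * Real.log (m₀ / k) ≤ k * (s / k) := by
          exact mul_le_mul_of_nonneg_left hlog hk.le
      _ = s := by field_simp
  -- Step (b): k * log (m / m₀) ≤ m - m₀
  have hb : k * Real.log (m / m₀) ≤ m - m₀ := by
    have hlog : Real.log (m / m₀) ≤ m / m₀ - 1 :=
      Real.log_le_sub_one_of_pos (by positivity)
    have h1 : k * Real.log (m / m₀) ≤ k * (m / m₀ - 1) :=
      mul_le_mul_of_nonneg_left hlog hk.le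
    have h2 : k * (m / m₀ - 1) ≤ m - m₀ := by
      have hkm₀ : k ≤ m₀ := by rw [hm₀def]; linarith
      have hmm₀ : m₀ ≤ m := hm
      rw [show k * (m / m₀ - 1) = k * (m - m₀) / m₀ by
        rw [div_sub_one hm₀.ne', mul_div_assoc], div_le_iff₀ hm₀]
      nlinarith [mul_le_mul_of_nonneg_right hkm₀ (by linarith : (0:ℝ) ≤ m - m₀)]
    linarith
  have hsplit : Real.log (m / k) = Real.log (m / m₀) + Real.log (m₀ / k) := by
    rw [← Real.log_mul (by positivity) (by positivity)]
    congr 1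
    field_simp
  have := calc k * Real.log (m / k)
      = k * Real.log (m / m₀) + k * Real.log (m₀ / k) := by rw [hsplit]; ring
    _ ≤ (m - m₀) + s := add_le_add hb ha
  rw [hm₀def] at this
  linarith

theorem stmt4 (ε δ : ℝ) (hε : ε ∈ Set.Ioo (0 : ℝ) 1) (hδ : δ ∈ Set.Ioo (0 : ℝ) 1)
    (r N : ℕ) (hr : 1 ≤ r) (hrN : r ≤ N)
    (hN : ((r : ℝ) - 1) + Real.log (1 / δ) +
        Real.sqrt (2 * ((r : ℝ) - 1) * Real.log (1 / δ)) ≤ ε * (N : ℝ)) :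
    binomCdf ((r : ℤ) - 1) N ε ≤ δ := by
  obtain ⟨hε0, hε1⟩ := hε
  obtain ⟨hδ0, hδ1⟩ := hδ
  have hL : 0 < Real.log (1 / δ) := by
    rw [Real.log_pos_iff (by positivity)]
    rw [one_div]
    exact (one_lt_inv₀ hδ0).2 hδ1
  have hLδ : Real.log (1 / δ) = -Real.log δ := by
    rw [one_div, Real.log_inv]
  have hN0 : 0 < N := lt_of_lt_of_le hr hrN
  set L : ℝ := Real.log (1 / δ) with hLdef
  rcases eq_or_lt_of_le hr with hr1 | hr2
  · -- r = 1 case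
    have hrr : r = 1 := hr1.symm
    subst hrr
    have hsum : binomCdf (((1:ℕ) : ℤ) - 1) N ε = (1 - ε) ^ N := by
      unfold binomCdf
      rw [Finset.sum_eq_single_of_mem 0 (Finset.mem_range.2 (by omega))]
      · norm_num
      · intro i _ hi0
        rw [if_neg]
        push_cast
        omega
    rw [hsum]
    have hεN : L ≤ ε * N := by
      have : ((1:ℕ):ℝ) - 1 = 0 := by norm_num
      rw [this] at hN
      simpa using hN
    calc (1 - ε) ^ N ≤ Real.exp (-ε) ^ N := by
          apply pow_le_pow_left₀ (by linarith)
          linarith [Real.add_one_le_exp (-ε)]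
      _ = Real.exp (-(ε * N)) := by
          rw [← Real.exp_nat_mul]; ring_nf
      _ ≤ Real.exp (Real.log δ) := by
          apply Real.exp_le_exp.2
          rw [hLδ] at hεN
          linarith
      _ = δ := Real.exp_log hδ0
  · -- r ≥ 2 case
    set k : ℕ := r - 1 with hkdef
    have hk1 : 1 ≤ k := by omega
    have hkr : (k : ℝ) = (r : ℝ) - 1 := by
      rw [hkdef, Nat.cast_sub hr, Nat.cast_one]
    have hk0 : (0:ℝ) < k := by exact_mod_cast hk1
    set m : ℝ := ε * N with hmdef
    have hm : (k : ℝ) + L + Real.sqrt (2 * k * L) ≤ m := by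
      rw [hkr]; exact hN
    have hkm : (k : ℝ) < m := by
      have := Real.sqrt_nonneg (2 * (k:ℝ) * L)
      linarith
    have hm0 : 0 < m := lt_trans hk0 hkm
    set y : ℝ := k / m with hydef
    have hy0 : 0 < y := by positivity
    have hy1 : y ≤ 1 := by
      rw [hydef, div_le_one hm0]; exact hkm.le
    have hcast : ((r : ℤ) - 1) = ((k : ℕ) : ℤ) := by
      rw [hkdef, Nat.cast_sub hr, Nat.cast_one]
    have hbound := chernoff_sum ε y hε0 hε1 hy0 hy1 N k
    rw [show binomCdf ((r : ℤ) - 1) N ε = binomCdf ((k : ℕ) : ℤ) N ε by rw [hcast]] at *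
    unfold binomCdf
    refine le_trans hbound ?_
    have hεy : ε * y + (1 - ε) = 1 + ((k:ℝ)/N - ε) := by
      rw [hydef, hmdef]
      field_simp
      ring
    have hyinv : y⁻¹ = m / k := by rw [hydef, inv_div]
    have hbase_nonneg : (0:ℝ) ≤ ε * y + (1 - ε) := by
      have h1 : (0:ℝ) ≤ ε * y := by positivity
      linarith
    have hstep1 : (ε * y + (1 - ε)) ^ N ≤ Real.exp ((k:ℝ) - m) := by
      calc (ε * y + (1 - ε)) ^ N ≤ Real.exp ((k:ℝ)/N - ε) ^ N := by
            apply pow_le_pow_left₀ hbase_nonneg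
            rw [hεy]
            linarith [Real.add_one_le_exp ((k:ℝ)/N - ε)]
        _ = Real.exp (((k:ℝ)/N - ε) * N) := by
            rw [← Real.exp_nat_mul, mul_comm]
        _ = Real.exp ((k:ℝ) - m) := by
            rw [hmdef]
            congr 1
            field_simp
    have hpow : y⁻¹ ^ k = Real.exp ((k:ℝ) * Real.log (m / k)) := by
      rw [hyinv, Real.exp_nat_mul, Real.exp_log (div_pos hm0 hk0)]
    calc y⁻¹ ^ k * (ε * y + (1 - ε)) ^ N
        ≤ Real.exp ((k:ℝ) * Real.log (m / k)) * Real.exp ((k:ℝ) - m) := by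
          rw [hpow]
          exact mul_le_mul_of_nonneg_left hstep1 (Real.exp_nonneg _)
      _ = Real.exp ((k:ℝ) * Real.log (m / k) + ((k:ℝ) - m)) := by rw [← Real.exp_add]
      _ ≤ Real.exp (-L) := by
          apply Real.exp_le_exp.2
          have := key_ineq (k:ℝ) L m hk0 hL hm
          linarith
      _ = Real.exp (Real.log δ) := by rw [hLδ]; ring_nf
      _ = δ := Real.exp_log hδ0
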